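/- Let G=(V,E) be a finite simple undirected graph with β_e > 1 for all e ∈ E and 0 < λ_v ≤ 1 for all v ∈ V, and let the weighted random cluster model have edge parameters q_e = 1 − 1/β_e and vertex weights λ. Then P_{I→R} and P_{R→I} are adjoint with respect to the stationary inner products: for all functions f : {0,1}^V → ℝ and g : 2^E → ℝ, Σ_{σ∈{0,1}^V} π_Ising(σ)·f(σ)·(Σ_{S⊆E} P_{I→R}(σ,S)·g(S)) = Σ_{S⊆E} π_wrc(S)·g(S)·(Σ_{σ∈{0,1}^V} P_{R→I}(S,σ)·f(σ)). -/
import Mathlib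


open Finset
open scoped Classical

noncomputable section

variable {V : Type*} [Fintype V] [DecidableEq V]

/-- The vertex set of the connected component of `v` in the graph `(V, S)`. -/
def compOf (S : Finset (Sym2 V)) (v : V) : Finset V :=
  Finset.univ.filter fun u => (SimpleGraph.fromEdgeSet (↑S : Set (Sym2 V))).Reachable v u

/-- `κ(V,S)`: the set of vertex sets of connected components of the graph `(V, S)`. -/
def kappa (S : Finset (Sym2 V)) : Finset (Finset V) :=
  Finset.univ.image (compOf S)

/-- `∏_{C ∈ κ(V,S)} (1 + ∏_{u ∈ C} λ_u)`. -/
def clusterProd (S : Finset (Sym2 V)) (lam : V → ℝ) : ℝ :=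
  ∏ C ∈ kappa S, (1 + ∏ u ∈ C, lam u)

/-- Weight of an edge subset `S ⊆ E₀` in the weighted random cluster model. -/
def wtWRC (E₀ : Finset (Sym2 V)) (q : Sym2 V → ℝ) (lam : V → ℝ) (S : Finset (Sym2 V)) : ℝ :=
  (∏ e ∈ S, q e) * (∏ f ∈ E₀ \ S, (1 - q f)) * clusterProd S lam

/-- Partition function of the weighted random cluster model. -/
def ZWRC (E₀ : Finset (Sym2 V)) (q : Sym2 V → ℝ) (lam : V → ℝ) : ℝ :=
  ∑ S ∈ E₀.powerset, wtWRC E₀ q lam S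

/-- The weighted random cluster distribution. -/
def piWRC (E₀ : Finset (Sym2 V)) (q : Sym2 V → ℝ) (lam : V → ℝ) (S : Finset (Sym2 V)) : ℝ :=
  wtWRC E₀ q lam S / ZWRC E₀ q lam

/-- The monochromatic edges of a spin configuration `σ`. -/
def monoEdges (E₀ : Finset (Sym2 V)) (σ : V → Bool) : Finset (Sym2 V) :=
  E₀.filter fun e => (e.map σ).IsDiag

/-- Weight of a spin configuration in the Ising model. -/
def wtIsing (E₀ : Finset (Sym2 V)) (β : Sym2 V → ℝ) (lam : V → ℝ) (σ : V → Bool) : ℝ :=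
  (∏ e ∈ monoEdges E₀ σ, β e) * ∏ v : V, (if σ v then lam v else 1)

/-- Ising partition function. -/
def ZIsing (E₀ : Finset (Sym2 V)) (β : Sym2 V → ℝ) (lam : V → ℝ) : ℝ :=
  ∑ σ : V → Bool, wtIsing E₀ β lam σ

/-- Ising Gibbs distribution. -/
def piIsing (E₀ : Finset (Sym2 V)) (β : Sym2 V → ℝ) (lam : V → ℝ) (σ : V → Bool) : ℝ :=
  wtIsing E₀ β lam σ / ZIsing E₀ β lam

/-- Vertices of odd degree in the graph `(V, S)`. -/
def oddVerts (S : Finset (Sym2 V)) : Finset V :=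
  Finset.univ.filter fun v => Odd (S.filter fun e => v ∈ e).card

/-- Weight of an edge subset in the subgraph-world model. -/
def wtSG (E₀ : Finset (Sym2 V)) (p : Sym2 V → ℝ) (η : V → ℝ) (S : Finset (Sym2 V)) : ℝ :=
  (∏ e ∈ S, p e) * (∏ f ∈ E₀ \ S, (1 - p f)) * ∏ v ∈ oddVerts S, η v

/-- Subgraph-world partition function. -/
def ZSG (E₀ : Finset (Sym2 V)) (p : Sym2 V → ℝ) (η : V → ℝ) : ℝ :=
  ∑ S ∈ E₀.powerset, wtSG E₀ p η S

/-- Subgraph-world distribution. -/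
def piSG (E₀ : Finset (Sym2 V)) (p : Sym2 V → ℝ) (η : V → ℝ) (S : Finset (Sym2 V)) : ℝ :=
  wtSG E₀ p η S / ZSG E₀ p η

/-- The transformation `P_{I→R}` from Ising configurations to edge subsets. -/
def PIR (E₀ : Finset (Sym2 V)) (β : Sym2 V → ℝ) (σ : V → Bool) (S : Finset (Sym2 V)) : ℝ :=
  if S ⊆ monoEdges E₀ σ then
    (∏ e ∈ S, (1 - (β e)⁻¹)) * ∏ f ∈ monoEdges E₀ σ \ S, (β f)⁻¹
  else 0

/-- The transformation `P_{R→I}` from edge subsets to Ising configurations. -/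
def PRI (E₀ : Finset (Sym2 V)) (lam : V → ℝ) (S : Finset (Sym2 V)) (σ : V → Bool) : ℝ :=
  if S ⊆ monoEdges E₀ σ then
    ∏ C ∈ kappa S, ((∏ v ∈ C, if σ v then lam v else 1) / (1 + ∏ v ∈ C, lam v))
  else 0

/-- Swendsen-Wang dynamics for the Ising model: `P_{I→R} ⬝ P_{R→I}`. -/
def PSWIsing (E₀ : Finset (Sym2 V)) (β : Sym2 V → ℝ) (lam : V → ℝ) (σ τ : V → Bool) : ℝ :=
  ∑ S ∈ E₀.powerset, PIR E₀ β σ S * PRI E₀ lam S τ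

/-- Swendsen-Wang dynamics for the weighted random cluster model: `P_{R→I} ⬝ P_{I→R}`. -/
def PSWwrc (E₀ : Finset (Sym2 V)) (β : Sym2 V → ℝ) (lam : V → ℝ)
    (S S' : Finset (Sym2 V)) : ℝ :=
  ∑ σ : V → Bool, PRI E₀ lam S σ * PIR E₀ β σ S'

/-- Lazy edge-flipping (Metropolis) dynamics for a distribution `pi` on subsets of `E₀`. -/
def PEF (E₀ : Finset (Sym2 V)) (pi : Finset (Sym2 V) → ℝ) (x y : Finset (Sym2 V)) : ℝ :=
  if x = y then
    1 - (1 / (2 * (E₀.card : ℝ))) * ∑ e ∈ E₀, min 1 (pi (symmDiff x {e}) / pi x)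
  else if (symmDiff x y).card = 1 then
    (1 / (2 * (E₀.card : ℝ))) * min 1 (pi y / pi x)
  else 0

/-- Variance of `f` with respect to a distribution `pi` supported on `states`. -/
def varOn {α : Type*} (states : Finset α) (pi f : α → ℝ) : ℝ :=
  (∑ x ∈ states, pi x * f x ^ 2) - (∑ x ∈ states, pi x * f x) ^ 2

/-- Dirichlet form of a Markov kernel `P` with stationary distribution `pi` on `states`. -/
def dirichletOn {α : Type*} (states : Finset α) (pi : α → ℝ) (P : α → α → ℝ) (f : α → ℝ) : ℝ :=
  ∑ x ∈ states, pi x * f x * (f x - ∑ y ∈ states, P x y * f y)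

/-- Spectral gap of a reversible Markov kernel `P` with stationary distribution `pi`. -/
def gapOn {α : Type*} (states : Finset α) (pi : α → ℝ) (P : α → α → ℝ) : ℝ :=
  sInf ((fun f : α → ℝ => dirichletOn states pi P f / varOn states pi f) ''
    {f | varOn states pi f ≠ 0})

/-- Total variation distance between two distributions on `states`. -/
def dTV {α : Type*} (states : Finset α) (μ ν : α → ℝ) : ℝ :=
  (1 / 2) * ∑ z ∈ states, |μ z - ν z|

/-- `t`-step transition probabilities of the Markov kernel `P` on state space `states`. -/
def kpow {α : Type*} (states : Finset α) (P : α → α → ℝ) : ℕ → α → α → ℝ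
  | 0 => fun x y => if x = y then 1 else 0
  | (t + 1) => fun x y => ∑ z ∈ states, P x z * kpow states P t z y



section AdjointAux

variable {V : Type*} [Fintype V] [DecidableEq V]

lemma mem_compOf {S : Finset (Sym2 V)} {v u : V} :
    u ∈ compOf S v ↔ (SimpleGraph.fromEdgeSet (↑S : Set (Sym2 V))).Reachable v u := by
  simp [compOf]

lemma self_mem_compOf (S : Finset (Sym2 V)) (v : V) : v ∈ compOf S v :=
  mem_compOf.2 (SimpleGraph.Reachable.refl v)

lemma compOf_eq_of_mem {S : Finset (Sym2 V)} {v u : V} (h : u ∈ compOf S v) :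
    compOf S u = compOf S v := by
  rw [mem_compOf] at h
  ext w
  rw [mem_compOf, mem_compOf]
  exact ⟨fun hw => h.trans hw, fun hw => h.symm.trans hw⟩

lemma compOf_mem_kappa (S : Finset (Sym2 V)) (v : V) : compOf S v ∈ kappa S :=
  Finset.mem_image_of_mem _ (Finset.mem_univ v)

lemma compOf_eq_of_mem_kappa {S : Finset (Sym2 V)} {C : Finset V} (hC : C ∈ kappa S)
    {v : V} (hv : v ∈ C) : compOf S v = C := by
  obtain ⟨a, -, rfl⟩ := Finset.mem_image.1 hC
  exact compOf_eq_of_mem hv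

lemma kappa_nonempty_mem {S : Finset (Sym2 V)} {C : Finset V} (hC : C ∈ kappa S) :
    C.Nonempty := by
  obtain ⟨a, -, rfl⟩ := Finset.mem_image.1 hC
  exact ⟨a, self_mem_compOf S a⟩

lemma prod_kappa_prod {M : Type*} [CommMonoid M] (S : Finset (Sym2 V)) (h : V → M) :
    ∏ C ∈ kappa S, ∏ v ∈ C, h v = ∏ v, h v := by
  rw [← Finset.prod_biUnion]
  · congr 1
    ext v
    simp only [Finset.mem_biUnion, Finset.mem_univ, iff_true]
    exact ⟨compOf S v, compOf_mem_kappa S v, self_mem_compOf S v⟩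
  · intro C hC D hD hne
    refine Finset.disjoint_left.2 fun u hu hu' => hne ?_
    rw [← compOf_eq_of_mem_kappa hC hu, ← compOf_eq_of_mem_kappa hD hu']

lemma subset_mono_iff {E₀ S : Finset (Sym2 V)} (hSE : S ⊆ E₀)
    (hE : ∀ e ∈ E₀, ¬ e.IsDiag) (σ : V → Bool) :
    S ⊆ monoEdges E₀ σ ↔ ∀ C ∈ kappa S, ∀ u ∈ C, ∀ v ∈ C, σ u = σ v := by
  constructor
  · intro hS C hC u hu v hv
    have key : ∀ {x y : V},
        (SimpleGraph.fromEdgeSet (↑S : Set (Sym2 V))).Reachable x y → σ x = σ y := by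
      intro x y hxy
      obtain ⟨w⟩ := hxy
      induction w with
      | nil => rfl
      | cons hadj _ ih =>
        rw [SimpleGraph.fromEdgeSet_adj] at hadj
        have hmem : _ ∈ S := Finset.mem_coe.1 hadj.1
        have h2 := hS hmem
        rw [monoEdges, Finset.mem_filter] at h2
        have h3 := h2.2
        rw [Sym2.map_pair_eq, Sym2.mk_isDiag_iff] at h3
        exact h3.trans ih
    obtain ⟨a, -, rfl⟩ := Finset.mem_image.1 hC
    exact (key (mem_compOf.1 hu)).symm.trans (key (mem_compOf.1 hv))
  · intro h e he
    induction e using Sym2.ind with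
    | _ a b =>
      have hne : a ≠ b := fun hab => hE _ (hSE he) (by rw [Sym2.mk_isDiag_iff]; exact hab)
      have hadj : (SimpleGraph.fromEdgeSet (↑S : Set (Sym2 V))).Adj a b :=
        (SimpleGraph.fromEdgeSet_adj _).2 ⟨Finset.mem_coe.2 he, hne⟩
      have hb : b ∈ compOf S a := mem_compOf.2 hadj.reachable
      have hab : σ a = σ b :=
        h _ (compOf_mem_kappa S a) a (self_mem_compOf S a) b hb
      rw [monoEdges, Finset.mem_filter]
      exact ⟨hSE he, by rw [Sym2.map_pair_eq, Sym2.mk_isDiag_iff]; exact hab⟩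

lemma sum_PIR (E₀ : Finset (Sym2 V)) (β : Sym2 V → ℝ) (σ : V → Bool) :
    ∑ S ∈ E₀.powerset, PIR E₀ β σ S = 1 := by
  have hM : monoEdges E₀ σ ⊆ E₀ := Finset.filter_subset _ _
  rw [← Finset.sum_subset (Finset.powerset_mono.2 hM)]
  · have h : ∀ S ∈ (monoEdges E₀ σ).powerset,
        PIR E₀ β σ S = (∏ e ∈ S, (1 - (β e)⁻¹)) * ∏ f ∈ monoEdges E₀ σ \ S, (β f)⁻¹ := by
      intro S hS
      rw [PIR, if_pos (Finset.mem_powerset.1 hS)]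
    rw [Finset.sum_congr rfl h, ← Finset.prod_add]
    refine Finset.prod_eq_one fun e he => ?_
    rw [sub_add_cancel]
  · intro S _ hS
    rw [PIR, if_neg (fun h => hS (Finset.mem_powerset.2 h))]

/-- Component-local factor for `PRI`. -/
def gComp (lam : V → ℝ) (C : Finset V) (σ : V → Bool) : ℝ :=
  if ∀ u ∈ C, ∀ v ∈ C, σ u = σ v then
    (∏ v ∈ C, if σ v then lam v else 1) / (1 + ∏ v ∈ C, lam v)
  else 0

lemma PRI_eq_prod_gComp {E₀ S : Finset (Sym2 V)} (hSE : S ⊆ E₀)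
    (hE : ∀ e ∈ E₀, ¬ e.IsDiag) (lam : V → ℝ) (σ : V → Bool) :
    PRI E₀ lam S σ = ∏ C ∈ kappa S, gComp lam C σ := by
  by_cases h : S ⊆ monoEdges E₀ σ
  · rw [PRI, if_pos h]
    refine Finset.prod_congr rfl fun C hC => ?_
    rw [gComp, if_pos ((subset_mono_iff hSE hE σ).1 h C hC)]
  · rw [PRI, if_neg h]
    rw [subset_mono_iff hSE hE σ] at h
    push_neg at h
    obtain ⟨C, hC, u, hu, v, hv, huv⟩ := h
    refine (Finset.prod_eq_zero hC ?_).symm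
    rw [gComp, if_neg]
    push_neg
    exact ⟨u, hu, v, hv, huv⟩

/-- Splitting a spin configuration according to connected components. -/
def compEquiv (S : Finset (Sym2 V)) :
    (V → Bool) ≃ (∀ C : kappa S, ((C : Finset V) : Type _) → Bool) where
  toFun σ C v := σ v.1
  invFun F v := F ⟨compOf S v, compOf_mem_kappa S v⟩ ⟨v, self_mem_compOf S v⟩
  left_inv σ := rfl
  right_inv F := by
    funext C v
    obtain ⟨C, hC⟩ := C
    obtain ⟨v, hv⟩ := v
    have h : compOf S v = C := compOf_eq_of_mem_kappa hC hv
    subst h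
    rfl

/-- Local factor as a function of the restricted configuration. -/
def locFac (lam : V → ℝ) (C : Finset V) (τ : ↥C → Bool) : ℝ :=
  if ∀ u v : ↥C, τ u = τ v then
    (∏ v : ↥C, if τ v then lam v.1 else 1) / (1 + ∏ v ∈ C, lam v)
  else 0

lemma sum_PRI (E₀ : Finset (Sym2 V)) (lam : V → ℝ) (hlam : ∀ v, 0 < lam v)
    (hE : ∀ e ∈ E₀, ¬ e.IsDiag) {S : Finset (Sym2 V)} (hSE : S ⊆ E₀) :
    ∑ σ : V → Bool, PRI E₀ lam S σ = 1 := by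
  classical
  simp_rw [PRI_eq_prod_gComp hSE hE]
  have step1 : ∑ σ : V → Bool, ∏ C ∈ kappa S, gComp lam C σ
      = ∑ F : ∀ C : kappa S, ((C : Finset V) : Type _) → Bool,
          ∏ C : kappa S, (fun C τ => locFac lam (C : Finset V) τ) C (F C) := by
    refine Fintype.sum_equiv (compEquiv S) _ _ fun σ => ?_
    rw [← Finset.prod_coe_sort]
    refine Finset.prod_congr rfl fun C _ => ?_
    have hval : ∀ (v : V) (hv : v ∈ (C : Finset V)),
        σ v = (compEquiv S) σ C ⟨v, hv⟩ := fun v hv => rfl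
    simp only [gComp, locFac]
    by_cases hcond : ∀ u ∈ (C : Finset V), ∀ v ∈ (C : Finset V), σ u = σ v
    · rw [if_pos hcond, if_pos]
      · exact congrArg (· / (1 + ∏ v ∈ (C : Finset V), lam v))
          (Finset.prod_coe_sort (C : Finset V) (fun v => if σ v then lam v else 1)).symm
      · intro u v
        have := hcond u.1 u.2 v.1 v.2
        rwa [hval u.1 u.2, hval v.1 v.2] at this
    · rw [if_neg hcond, if_neg]
      intro hcon
      exact hcond fun u hu v hv => by
        rw [hval u hu, hval v hv]; exact hcon ⟨u, hu⟩ ⟨v, hv⟩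
  rw [step1, ← Fintype.prod_sum]
  refine Finset.prod_eq_one fun C _ => ?_
  have hCne : Nonempty ((C : Finset V) : Type _) :=
    Finset.nonempty_coe_sort.2 (kappa_nonempty_mem C.2)
  obtain ⟨u₀⟩ := hCne
  have hPpos : 0 < ∏ v ∈ (C : Finset V), lam v := Finset.prod_pos fun v _ => hlam v
  have hne : (1 : ℝ) + ∏ v ∈ (C : Finset V), lam v ≠ 0 := by positivity
  have htf : (fun _ : ((C : Finset V) : Type _) => true) ≠ fun _ => false := fun h => by
    simpa using congrFun h u₀
  have hpt : ∀ τ : ((C : Finset V) : Type _) → Bool,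
      locFac lam (C : Finset V) τ =
        ((if τ = fun _ => true then ∏ v ∈ (C : Finset V), lam v else 0)
          + (if τ = fun _ => false then 1 else 0)) / (1 + ∏ v ∈ (C : Finset V), lam v) := by
    intro τ
    rw [locFac]
    by_cases h1 : τ = fun _ => true
    · subst h1
      rw [if_pos (fun u v => rfl), if_pos rfl, if_neg htf, add_zero]
      congr 1
      simp only [if_true]
      exact Finset.prod_coe_sort _ _
    · by_cases h2 : τ = fun _ => false
      · subst h2
        rw [if_pos (fun u v => rfl), if_neg h1, if_pos rfl, zero_add]
        congr 1
        simp
      · have hcond : ¬ ∀ u v : ((C : Finset V) : Type _), τ u = τ v := by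
          intro hcon
          rcases Bool.eq_false_or_eq_true (τ u₀) with h | h
          · exact h1 (funext fun v => (hcon v u₀).trans h)
          · exact h2 (funext fun v => (hcon v u₀).trans h)
        rw [if_neg hcond, if_neg h1, if_neg h2]
        simp
  rw [Finset.sum_congr rfl fun τ _ => hpt τ, ← Finset.sum_div, Finset.sum_add_distrib,
    Finset.sum_ite_eq' Finset.univ (fun _ => true)
      (fun _ => ∏ v ∈ (C : Finset V), lam v),
    Finset.sum_ite_eq' Finset.univ (fun _ => false) (fun _ => (1 : ℝ))]
  simp only [Finset.mem_univ, if_true]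
  rw [add_comm, div_self hne]

lemma weight_identity (E₀ : Finset (Sym2 V)) (β : Sym2 V → ℝ) (lam : V → ℝ)
    (hβ : ∀ e ∈ E₀, β e ≠ 0) (hlam : ∀ v, 0 < lam v)
    {S : Finset (Sym2 V)} (hSE : S ⊆ E₀) (σ : V → Bool) :
    wtIsing E₀ β lam σ * PIR E₀ β σ S =
      (∏ e ∈ E₀, β e) * (wtWRC E₀ (fun e => 1 - (β e)⁻¹) lam S * PRI E₀ lam S σ) := by
  by_cases hS : S ⊆ monoEdges E₀ σ
  case neg =>
    rw [PIR, if_neg hS, PRI, if_neg hS]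
    ring
  have hM : monoEdges E₀ σ ⊆ E₀ := Finset.filter_subset _ _
  have hclus : (∏ C ∈ kappa S, ((∏ v ∈ C, if σ v then lam v else 1) / (1 + ∏ v ∈ C, lam v))) *
      ∏ C ∈ kappa S, (1 + ∏ u ∈ C, lam u)
      = ∏ v : V, (if σ v then lam v else 1) := by
    rw [← Finset.prod_mul_distrib, ← prod_kappa_prod S (fun v => if σ v then lam v else 1)]
    refine Finset.prod_congr rfl fun C hC => ?_
    have hpos : (0:ℝ) < ∏ u ∈ C, lam u := Finset.prod_pos fun v _ => hlam v
    have h0 : (1:ℝ) + ∏ u ∈ C, lam u ≠ 0 := by positivity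
    field_simp
  have hMsplit : ∏ e ∈ monoEdges E₀ σ, β e
      = (∏ e ∈ S, β e) * ∏ e ∈ monoEdges E₀ σ \ S, β e := by
    rw [← Finset.prod_sdiff hS]
    ring
  have hE0 : ∏ e ∈ E₀, β e = (∏ e ∈ S, β e) * ∏ e ∈ E₀ \ S, β e := by
    rw [← Finset.prod_sdiff hSE]
    ring
  have hcancel1 : (∏ e ∈ monoEdges E₀ σ \ S, β e) * ∏ e ∈ monoEdges E₀ σ \ S, (β e)⁻¹ = 1 := by
    rw [← Finset.prod_mul_distrib]
    exact Finset.prod_eq_one fun e he =>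
      mul_inv_cancel₀ (hβ e (hM (Finset.mem_sdiff.1 he).1))
  have hcancel2 : (∏ e ∈ E₀ \ S, β e) * ∏ e ∈ E₀ \ S, (1 - (1 - (β e)⁻¹)) = 1 := by
    rw [← Finset.prod_mul_distrib]
    refine Finset.prod_eq_one fun e he => ?_
    rw [sub_sub_cancel]
    exact mul_inv_cancel₀ (hβ e ((Finset.mem_sdiff.1 he).1))
  rw [wtIsing, wtWRC, clusterProd, PIR, if_pos hS, PRI, if_pos hS]
  linear_combination
    ((∏ v : V, (if σ v then lam v else 1)) * (∏ e ∈ S, (1 - (β e)⁻¹)) *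
      (∏ e ∈ monoEdges E₀ σ \ S, (β e)⁻¹)) * hMsplit
    - ((∏ e ∈ S, (1 - (β e)⁻¹)) * (∏ e ∈ E₀ \ S, (1 - (1 - (β e)⁻¹))) *
      (∏ C ∈ kappa S, (1 + ∏ u ∈ C, lam u)) *
      (∏ C ∈ kappa S, ((∏ v ∈ C, if σ v then lam v else 1) / (1 + ∏ v ∈ C, lam v)))) * hE0
    + ((∏ e ∈ S, β e) * (∏ e ∈ S, (1 - (β e)⁻¹)) *
      (∏ v : V, (if σ v then lam v else 1))) * hcancel1
    - ((∏ e ∈ S, β e) * (∏ e ∈ S, (1 - (β e)⁻¹)) *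
      (∏ C ∈ kappa S, (1 + ∏ u ∈ C, lam u)) *
      (∏ C ∈ kappa S, ((∏ v ∈ C, if σ v then lam v else 1) / (1 + ∏ v ∈ C, lam v)))) * hcancel2
    - ((∏ e ∈ S, β e) * (∏ e ∈ S, (1 - (β e)⁻¹))) * hclus

lemma Z_eq (E₀ : Finset (Sym2 V)) (β : Sym2 V → ℝ) (lam : V → ℝ)
    (hβ : ∀ e ∈ E₀, β e ≠ 0) (hlam : ∀ v, 0 < lam v) (hE : ∀ e ∈ E₀, ¬ e.IsDiag) :
    ZIsing E₀ β lam = (∏ e ∈ E₀, β e) * ZWRC E₀ (fun e => 1 - (β e)⁻¹) lam := by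
  rw [ZIsing]
  have h1 : ∀ σ : V → Bool, wtIsing E₀ β lam σ
      = ∑ S ∈ E₀.powerset, wtIsing E₀ β lam σ * PIR E₀ β σ S := by
    intro σ
    rw [← Finset.mul_sum, sum_PIR E₀ β σ, mul_one]
  rw [Finset.sum_congr rfl fun σ _ => h1 σ, Finset.sum_comm, ZWRC, Finset.mul_sum]
  refine Finset.sum_congr rfl fun S hS => ?_
  have hSE := Finset.mem_powerset.1 hS
  rw [Finset.sum_congr rfl fun σ (_ : σ ∈ Finset.univ) =>
    weight_identity E₀ β lam hβ hlam hSE σ, ← Finset.mul_sum, ← Finset.mul_sum,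
    sum_PRI E₀ lam hlam hE hSE, mul_one]

end AdjointAux

/-- `P_{I→R}` and `P_{R→I}` are adjoint with respect to the stationary inner products,
with `q_e = 1 − 1/β_e`. -/
theorem pir_pri_adjoint {V : Type*} [Fintype V] [DecidableEq V]
    (G : SimpleGraph V) [DecidableRel G.Adj]
    (β : Sym2 V → ℝ) (lam : V → ℝ)
    (hβ : ∀ e ∈ G.edgeFinset, 1 < β e)
    (hlam : ∀ v : V, 0 < lam v ∧ lam v ≤ 1) :
    ∀ (f : (V → Bool) → ℝ) (g : Finset (Sym2 V) → ℝ),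
      (∑ σ : V → Bool, piIsing G.edgeFinset β lam σ * f σ *
          (∑ S ∈ G.edgeFinset.powerset, PIR G.edgeFinset β σ S * g S)) =
        ∑ S ∈ G.edgeFinset.powerset,
          piWRC G.edgeFinset (fun e => 1 - (β e)⁻¹) lam S * g S *
            (∑ σ : V → Bool, PRI G.edgeFinset lam S σ * f σ) := by
  intro f g
  have hβ0 : ∀ e ∈ G.edgeFinset, β e ≠ 0 := fun e he => ne_of_gt (lt_trans one_pos (hβ e he))
  have hlam0 : ∀ v, 0 < lam v := fun v => (hlam v).1
  have hE : ∀ e ∈ G.edgeFinset, ¬ e.IsDiag := fun e he =>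
    SimpleGraph.not_isDiag_of_mem_edgeFinset he
  have hprod : (∏ e ∈ G.edgeFinset, β e) ≠ 0 := Finset.prod_ne_zero_iff.2 hβ0
  have key : ∀ S ∈ G.edgeFinset.powerset, ∀ σ : V → Bool,
      piIsing G.edgeFinset β lam σ * PIR G.edgeFinset β σ S
        = piWRC G.edgeFinset (fun e => 1 - (β e)⁻¹) lam S * PRI G.edgeFinset lam S σ := by
    intro S hS σ
    have hSE := Finset.mem_powerset.1 hS
    calc piIsing G.edgeFinset β lam σ * PIR G.edgeFinset β σ S
        = wtIsing G.edgeFinset β lam σ * PIR G.edgeFinset β σ S / ZIsing G.edgeFinset β lam := by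
          rw [piIsing]; ring
      _ = (∏ e ∈ G.edgeFinset, β e) *
            (wtWRC G.edgeFinset (fun e => 1 - (β e)⁻¹) lam S * PRI G.edgeFinset lam S σ) /
            ((∏ e ∈ G.edgeFinset, β e) * ZWRC G.edgeFinset (fun e => 1 - (β e)⁻¹) lam) := by
          rw [weight_identity G.edgeFinset β lam hβ0 hlam0 hSE σ,
            Z_eq G.edgeFinset β lam hβ0 hlam0 hE]
      _ = wtWRC G.edgeFinset (fun e => 1 - (β e)⁻¹) lam S * PRI G.edgeFinset lam S σ /
            ZWRC G.edgeFinset (fun e => 1 - (β e)⁻¹) lam :=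
          mul_div_mul_left _ _ hprod
      _ = piWRC G.edgeFinset (fun e => 1 - (β e)⁻¹) lam S * PRI G.edgeFinset lam S σ := by
          rw [piWRC]; ring
  calc ∑ σ : V → Bool, piIsing G.edgeFinset β lam σ * f σ *
          (∑ S ∈ G.edgeFinset.powerset, PIR G.edgeFinset β σ S * g S)
      = ∑ σ : V → Bool, ∑ S ∈ G.edgeFinset.powerset,
          piIsing G.edgeFinset β lam σ * PIR G.edgeFinset β σ S * (f σ * g S) := by
        refine Finset.sum_congr rfl fun σ _ => ?_
        rw [Finset.mul_sum]
        exact Finset.sum_congr rfl fun S _ => by ring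
    _ = ∑ S ∈ G.edgeFinset.powerset, ∑ σ : V → Bool,
          piIsing G.edgeFinset β lam σ * PIR G.edgeFinset β σ S * (f σ * g S) :=
        Finset.sum_comm
    _ = ∑ S ∈ G.edgeFinset.powerset, ∑ σ : V → Bool,
          piWRC G.edgeFinset (fun e => 1 - (β e)⁻¹) lam S * PRI G.edgeFinset lam S σ *
            (f σ * g S) := by
        exact Finset.sum_congr rfl fun S hS =>
          Finset.sum_congr rfl fun σ _ => by rw [key S hS σ]
    _ = ∑ S ∈ G.edgeFinset.powerset,
          piWRC G.edgeFinset (fun e => 1 - (β e)⁻¹) lam S * g S *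
            (∑ σ : V → Bool, PRI G.edgeFinset lam S σ * f σ) := by
        refine Finset.sum_congr rfl fun S _ => ?_
        rw [Finset.mul_sum]
        exact Finset.sum_congr rfl fun σ _ => by ring

end
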